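/- For blockade radius r = 1 and every n ≥ 1, the zeros of the polynomial Z_n are exactly the ⌊(n+1)/2⌋ pairwise distinct real numbers y_m = -1/(4 cos²(π m/(n+2))) for m = 1, 2, …, ⌊(n+1)/2⌋; in particular each y_m satisfies Z_n(y_m) = 0 and every zero of Z_n equals some y_m. -/

import Mathlib

open Polynomial

/-- The partition function of the 1d classical Rydberg blockade chain with `n` sites and
blockade radius `r`:  `Z_n(y) = Σ_{m=0}^{⌊(n+r)/(r+1)⌋} C(n - r(m-1), m) y^m`. -/
noncomputable def Z (r n : ℕ) : Polynomial ℝ :=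
  ∑ m ∈ Finset.range ((n + r) / (r + 1) + 1),
    Polynomial.C ((Nat.choose (n - r * (m - 1)) m : ℝ)) * Polynomial.X ^ m

lemma coeff_Z1 (n m : ℕ) : (Z 1 n).coeff m = (Nat.choose (n - (m - 1)) m : ℝ) := by
  unfold Z
  rw [Polynomial.finset_sum_coeff]
  simp only [Polynomial.coeff_C_mul, Polynomial.coeff_X_pow, mul_ite, mul_one, mul_zero,
    one_mul, Finset.sum_ite_eq (Finset.range ((n + 1) / (1 + 1) + 1))]
  split_ifs with h
  · rfl
  · rw [Finset.mem_range, not_lt] at h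
    rw [Nat.choose_eq_zero_of_lt (by omega)]
    norm_num

lemma pascal_aux (n m : ℕ) :
    ((n + 2) - m).choose (m + 1) = ((n + 1) - m).choose (m + 1) + (n - (m - 1)).choose m := by
  rcases Nat.eq_zero_or_pos m with h0 | h1
  · subst h0; simp [Nat.choose_one_right]
  rcases le_or_gt m n with hle | hlt
  · obtain ⟨k, rfl⟩ : ∃ k, n = m + k := ⟨n - m, by omega⟩
    rw [show m + k + 2 - m = k + 2 from by omega, show m + k + 1 - m = k + 1 from by omega,
      show m + k - (m - 1) = k + 1 from by omega, Nat.choose_succ_succ', Nat.add_comm]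
  · rw [Nat.choose_eq_zero_of_lt (by omega), Nat.choose_eq_zero_of_lt (by omega),
      Nat.choose_eq_zero_of_lt (by omega)]

lemma Z1_rec (n : ℕ) : Z 1 (n + 2) = Z 1 (n + 1) + Polynomial.X * Z 1 n := by
  ext m
  rw [Polynomial.coeff_add, coeff_Z1]
  cases m with
  | zero => simp [coeff_Z1]
  | succ m =>
      rw [Polynomial.coeff_X_mul, coeff_Z1, coeff_Z1]
      rw [show n + 2 - (m + 1 - 1) = n + 2 - m from by omega,
        show n + 1 - (m + 1 - 1) = n + 1 - m from by omega, pascal_aux]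
      push_cast; ring

lemma Z1_zero : Z 1 0 = 1 := by
  unfold Z; norm_num

lemma Z1_one : Z 1 1 = 1 + Polynomial.X := by
  unfold Z; norm_num [Finset.sum_range_succ]

lemma Z1_eval (θ : ℝ) (hc : Real.cos θ ≠ 0) (n : ℕ) :
    (Z 1 n).eval (-(1 / (4 * Real.cos θ ^ 2))) * (Real.sin θ * (2 * Real.cos θ) ^ (n + 1))
      = Real.sin (((n : ℝ) + 2) * θ) := by
  induction n using Nat.strong_induction_on with
  | _ n ih =>
    set c := Real.cos θ with hcdef
    set s := Real.sin θ with hsdef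
    rcases n with _ | _ | k
    · rw [Z1_zero]
      have : ((0:ℕ):ℝ) + 2 = 2 := by norm_num
      rw [this, Real.sin_two_mul]
      simp [← hcdef, ← hsdef]
      ring
    · rw [Z1_one]
      have h3 : ((1:ℕ):ℝ) + 2 = 3 := by norm_num
      rw [h3, Real.sin_three_mul]
      have hs2 : s ^ 2 = 1 - c ^ 2 := by
        rw [hsdef, hcdef, Real.sin_sq]
      simp only [Polynomial.eval_add, Polynomial.eval_one, Polynomial.eval_X]
      rw [← hsdef]
      field_simp
      linear_combination (16 * c ^ 2 * s) * hs2
    · have h1 := ih (k + 1) (by omega)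
      have h2 := ih k (by omega)
      rw [Z1_rec, Polynomial.eval_add, Polynomial.eval_mul, Polynomial.eval_X]
      have key : Real.sin (((k:ℝ) + 2 + 2) * θ)
          = 2 * c * Real.sin (((k:ℝ) + 1 + 2) * θ) - Real.sin (((k:ℝ) + 2) * θ) := by
        have e1 : ((k:ℝ) + 2 + 2) * θ = ((k:ℝ) + 1 + 2) * θ + θ := by ring
        have e2 : ((k:ℝ) + 2) * θ = ((k:ℝ) + 1 + 2) * θ - θ := by ring
        rw [e1, e2, Real.sin_add, Real.sin_sub]; ring
      push_cast at h1 h2 ⊢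
      have hx : -(1 / (4 * c ^ 2)) * (4 * c ^ 2) = -1 := by field_simp
      have h2' : -(1 / (4 * c ^ 2)) * ((Z 1 k).eval (-(1 / (4 * c ^ 2))))
            * (s * (2 * c) ^ (k + 1 + 1 + 1)) = -Real.sin (((k:ℝ) + 2) * θ) := by
        calc -(1 / (4 * c ^ 2)) * ((Z 1 k).eval (-(1 / (4 * c ^ 2))))
              * (s * (2 * c) ^ (k + 1 + 1 + 1))
            = (-(1 / (4 * c ^ 2)) * (4 * c ^ 2)) *
                ((Z 1 k).eval (-(1 / (4 * c ^ 2))) * (s * (2 * c) ^ (k + 1))) := by ring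
          _ = -Real.sin (((k:ℝ) + 2) * θ) := by rw [hx, h2]; ring
      have h1' : (Z 1 (k+1)).eval (-(1 / (4 * c ^ 2))) * (s * (2 * c) ^ (k + 1 + 1 + 1))
            = 2 * c * Real.sin (((k:ℝ) + 1 + 2) * θ) := by
        calc (Z 1 (k+1)).eval (-(1 / (4 * c ^ 2))) * (s * (2 * c) ^ (k + 1 + 1 + 1))
            = 2 * c * ((Z 1 (k+1)).eval (-(1 / (4 * c ^ 2))) * (s * (2 * c) ^ (k + 1 + 1))) := by
              ring
          _ = 2 * c * Real.sin (((k:ℝ) + 1 + 2) * θ) := by rw [h1]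
      have egoal : ((k:ℝ) + 1 + 1 + 2) = ((k:ℝ) + 2 + 2) := by ring
      rw [egoal, key]
      linear_combination h1' + h2'

lemma theta_bounds (n m : ℕ) (hm1 : 1 ≤ m) (hm2 : m ≤ (n + 1) / 2) :
    0 < Real.pi * m / ((n:ℝ) + 2) ∧ Real.pi * m / ((n:ℝ) + 2) < Real.pi / 2 := by
  have hn2 : (0:ℝ) < (n:ℝ) + 2 := by positivity
  have hm0 : (0:ℝ) < m := by exact_mod_cast hm1
  constructor
  · exact div_pos (mul_pos Real.pi_pos hm0) hn2
  · rw [div_lt_iff₀ hn2]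
    have h2m : (2 * m : ℝ) ≤ (n:ℝ) + 1 := by exact_mod_cast (by omega : 2 * m ≤ n + 1)
    nlinarith [Real.pi_pos]

lemma Z1_isRoot (n m : ℕ) (hm1 : 1 ≤ m) (hm2 : m ≤ (n + 1) / 2) :
    (Z 1 n).IsRoot (-(1 / (4 * Real.cos (Real.pi * m / (n + 2)) ^ 2))) := by
  set θ : ℝ := Real.pi * m / ((n:ℝ) + 2) with hθ
  obtain ⟨hθpos, hθlt⟩ := theta_bounds n m hm1 hm2
  have hcos : 0 < Real.cos θ :=
    Real.cos_pos_of_mem_Ioo ⟨by linarith [Real.pi_pos], hθlt⟩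
  have hsin : 0 < Real.sin θ :=
    Real.sin_pos_of_pos_of_lt_pi hθpos (by linarith [Real.pi_pos])
  have hE := Z1_eval θ hcos.ne' n
  have hn2 : ((n:ℝ) + 2) ≠ 0 := by positivity
  have harg : ((n:ℝ) + 2) * θ = m * Real.pi := by
    rw [hθ]; field_simp
  rw [harg, Real.sin_nat_mul_pi m] at hE
  have hne : Real.sin θ * (2 * Real.cos θ) ^ (n + 1) ≠ 0 := by positivity
  exact (mul_eq_zero.mp hE).resolve_right hne

lemma Z1_inj (n m m' : ℕ) (hm1 : 1 ≤ m) (hm2 : m ≤ (n + 1) / 2) (hm1' : 1 ≤ m')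
    (hm2' : m' ≤ (n + 1) / 2)
    (heq : (-(1 / (4 * Real.cos (Real.pi * m / (n + 2)) ^ 2)) : ℝ) =
      -(1 / (4 * Real.cos (Real.pi * m' / (n + 2)) ^ 2))) : m = m' := by
  set θ : ℝ := Real.pi * m / ((n:ℝ) + 2) with hθ
  set θ' : ℝ := Real.pi * m' / ((n:ℝ) + 2) with hθ'
  obtain ⟨hp, hl⟩ := theta_bounds n m hm1 hm2
  obtain ⟨hp', hl'⟩ := theta_bounds n m' hm1' hm2'
  have hcos : 0 < Real.cos θ := Real.cos_pos_of_mem_Ioo ⟨by linarith [Real.pi_pos], hl⟩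
  have hcos' : 0 < Real.cos θ' := Real.cos_pos_of_mem_Ioo ⟨by linarith [Real.pi_pos], hl'⟩
  have hcc : Real.cos θ = Real.cos θ' := by
    have h1 : (4 * Real.cos θ ^ 2) ≠ 0 := by positivity
    have h2 : (4 * Real.cos θ' ^ 2) ≠ 0 := by positivity
    field_simp at heq
    nlinarith [heq, hcos, hcos']
  have hθθ : θ = θ' := by
    apply Real.injOn_cos ⟨le_of_lt hp, by linarith [Real.pi_pos]⟩
      ⟨le_of_lt hp', by linarith [Real.pi_pos]⟩ hcc
  have hn2 : ((n:ℝ) + 2) ≠ 0 := by positivity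
  have : (m : ℝ) = m' := by
    rw [hθ, hθ'] at hθθ
    field_simp at hθθ
    linarith
  exact_mod_cast this

/-- For blockade radius `r = 1` and every `n ≥ 1`, the zeros of `Z_n` are
exactly the `⌊(n+1)/2⌋` pairwise distinct real numbers
`y_m = -1/(4 cos²(π m/(n+2)))` for `m = 1,…,⌊(n+1)/2⌋`. -/
theorem Z_zeros_r1 (n : ℕ) (hn : 1 ≤ n) :
    (∀ m : ℕ, 1 ≤ m → m ≤ (n + 1) / 2 →
        (Z 1 n).IsRoot (-(1 / (4 * Real.cos (Real.pi * m / (n + 2)) ^ 2)))) ∧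
    (∀ y : ℝ, (Z 1 n).IsRoot y → ∃ m : ℕ, 1 ≤ m ∧ m ≤ (n + 1) / 2 ∧
        y = -(1 / (4 * Real.cos (Real.pi * m / (n + 2)) ^ 2))) ∧
    (∀ m m' : ℕ, 1 ≤ m → m ≤ (n + 1) / 2 → 1 ≤ m' → m' ≤ (n + 1) / 2 →
        (-(1 / (4 * Real.cos (Real.pi * m / (n + 2)) ^ 2)) : ℝ) =
          -(1 / (4 * Real.cos (Real.pi * m' / (n + 2)) ^ 2)) → m = m') := by
  set d := (n + 1) / 2 with hd
  have hd1 : 1 ≤ d := by omega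
  refine ⟨fun m hm1 hm2 => Z1_isRoot n m hm1 hm2, ?_, fun m m' a b c e h => Z1_inj n m m' a b c e h⟩
  -- completeness
  have hcoeffd : (Z 1 n).coeff d ≠ 0 := by
    rw [coeff_Z1]
    have : 0 < Nat.choose (n - (d - 1)) d := Nat.choose_pos (by omega)
    exact_mod_cast this.ne'
  have hne0 : Z 1 n ≠ 0 := fun h => hcoeffd (by rw [h]; simp)
  have hle : (Z 1 n).natDegree ≤ d := by
    rw [Polynomial.natDegree_le_iff_coeff_eq_zero]
    intro m hm
    rw [coeff_Z1, Nat.choose_eq_zero_of_lt (by omega)]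
    norm_num
  set f : ℕ → ℝ := fun m => -(1 / (4 * Real.cos (Real.pi * m / (n + 2)) ^ 2)) with hf
  set T : Finset ℝ := (Finset.Icc 1 d).image f with hT
  have hTcard : T.card = d := by
    rw [hT, Finset.card_image_of_injOn, Nat.card_Icc]
    · omega
    · intro a ha b hb hab
      rw [Finset.coe_Icc, Set.mem_Icc] at ha hb
      exact Z1_inj n a b ha.1 ha.2 hb.1 hb.2 hab
  have hsub : T ⊆ (Z 1 n).roots.toFinset := by
    intro y hy
    rw [hT, Finset.mem_image] at hy
    obtain ⟨m, hm, rfl⟩ := hy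
    rw [Finset.mem_Icc] at hm
    rw [Multiset.mem_toFinset, Polynomial.mem_roots hne0]
    exact Z1_isRoot n m hm.1 hm.2
  intro y hy
  by_contra hcon
  push_neg at hcon
  have hyT : y ∉ T := by
    intro hmem
    rw [hT, Finset.mem_image] at hmem
    obtain ⟨m, hm, hfm⟩ := hmem
    rw [Finset.mem_Icc] at hm
    exact hcon m hm.1 hm.2 hfm.symm
  have hins : insert y T ⊆ (Z 1 n).roots.toFinset :=
    Finset.insert_subset (by rw [Multiset.mem_toFinset, Polynomial.mem_roots hne0]; exact hy) hsub
  have hc1 : (insert y T).card = d + 1 := by rw [Finset.card_insert_of_notMem hyT, hTcard]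
  have hc2 : (insert y T).card ≤ ((Z 1 n).roots.toFinset).card := Finset.card_le_card hins
  have hc3 : ((Z 1 n).roots.toFinset).card ≤ Multiset.card (Z 1 n).roots :=
    Multiset.toFinset_card_le _
  have hc4 : Multiset.card (Z 1 n).roots ≤ (Z 1 n).natDegree := Polynomial.card_roots' _
  omega
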